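/- Let M be a Kimura matrix with core matrix M̃ (the (N−1)x(N−1) block over states 1,...,N−1) and one-step fixation vector b (the column of transitions to state N from transient states). Then I−M̃ is invertible, and the unique vector F with F_0=0, F_N=1, M F^T = F^T satisfies F̃^T = (I−M̃)^{-1} b^T and 0 < F_i < 1 for all i=1,...,N−1. -/

import Mathlib

open Finset

/-- Embedding of the transient states `1,...,N-1` into `{0,...,N}`. -/
def emb (N : ℕ) (i : Fin (N-1)) : Fin (N+1) :=
  ⟨i.1 + 1, by have := i.2; omega⟩

/-- The core of a matrix: the block over the transient states `1,...,N-1`. -/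
def core (N : ℕ) (M : Matrix (Fin (N+1)) (Fin (N+1)) ℝ) :
    Matrix (Fin (N-1)) (Fin (N-1)) ℝ :=
  fun i j => M (emb N i) (emb N j)

lemma reach {n : ℕ} (A : Matrix (Fin n) (Fin n) ℝ) (hA0 : ∀ i j, 0 ≤ A i j)
    (hirr : ∀ i j : Fin n, ∃ k : ℕ, 0 < (A ^ k) i j) (S : Set (Fin n))
    (hstep : ∀ i ∈ S, ∀ j, 0 < A i j → j ∈ S) {i0 : Fin n} (hi0 : i0 ∈ S) :
    ∀ j, j ∈ S := by
  have hpow : ∀ (k : ℕ) (i j : Fin n), 0 ≤ (A ^ k) i j := by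
    intro k
    induction k with
    | zero =>
      intro i j
      by_cases h : i = j <;> simp [Matrix.one_apply, h]
    | succ k ih =>
      intro i j
      rw [pow_succ, Matrix.mul_apply]
      exact Finset.sum_nonneg fun l _ => mul_nonneg (ih i l) (hA0 l j)
  have key : ∀ (k : ℕ) (i j : Fin n), i ∈ S → 0 < (A ^ k) i j → j ∈ S := by
    intro k
    induction k with
    | zero =>
      intro i j hi h
      by_cases hij : i = j
      · exact hij ▸ hi
      · simp [Matrix.one_apply, hij] at h
    | succ k ih =>
      intro i j hi h
      rw [pow_succ', Matrix.mul_apply] at h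
      have hex : ∃ l, 0 < A i l * (A ^ k) l j := by
        by_contra hc
        push_neg at hc
        have : ∑ l, A i l * (A ^ k) l j ≤ 0 := Finset.sum_nonpos fun l _ => hc l
        linarith
      obtain ⟨l, hl⟩ := hex
      have h1 : 0 < A i l := by
        rcases (hA0 i l).lt_or_eq with h'|h'
        · exact h'
        · rw [← h', zero_mul] at hl; exact absurd hl (lt_irrefl 0)
      have h2 : 0 < (A ^ k) l j := by nlinarith [hpow k l j]
      exact ih l j (hstep i hi l h1) h2
  intro j
  obtain ⟨k, hk⟩ := hirr i0 j
  exact key k i0 j hi0 hk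

lemma ker_triv {n : ℕ} (A : Matrix (Fin n) (Fin n) ℝ) (hA0 : ∀ i j, 0 ≤ A i j)
    (hirr : ∀ i j : Fin n, ∃ k : ℕ, 0 < (A ^ k) i j)
    (hrow : ∀ i, ∑ j, A i j ≤ 1) (i0 : Fin n) (hi0 : ∑ j, A i0 j < 1)
    (x : Fin n → ℝ) (hx : A.mulVec x = x) : x = 0 := by
  by_contra hxne
  have hxe : ∃ j, x j ≠ 0 := by
    by_contra hc; push_neg at hc; exact hxne (funext hc)
  obtain ⟨jw, hjw⟩ := hxe
  obtain ⟨im, _, hm⟩ := Finset.exists_max_image Finset.univ (fun i => |x i|) ⟨jw, Finset.mem_univ jw⟩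
  set m := |x im| with hmdef
  have hm0 : 0 < m := lt_of_lt_of_le (abs_pos.mpr hjw) (hm jw (Finset.mem_univ jw))
  have hfix : ∀ i, ∑ l, A i l * x l = x i := fun i => congrFun hx i
  set S : Set (Fin n) := {i | m ≤ |x i|} with hS
  have hstep : ∀ i ∈ S, ∀ j, 0 < A i j → j ∈ S := by
    intro i hi j hAj
    have hterm : ∀ l, 0 ≤ A i l * (m - |x l|) :=
      fun l => mul_nonneg (hA0 i l) (by have := hm l (Finset.mem_univ l); linarith)
    have habs : m ≤ ∑ l, A i l * |x l| := by
      calc m ≤ |x i| := hi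
        _ = |∑ l, A i l * x l| := by rw [hfix i]
        _ ≤ ∑ l, |A i l * x l| := Finset.abs_sum_le_sum_abs _ _
        _ = ∑ l, A i l * |x l| := by
            apply Finset.sum_congr rfl
            intro l _
            rw [abs_mul, abs_of_nonneg (hA0 i l)]
    have hsum : ∑ l, A i l * (m - |x l|) ≤ 0 := by
      have e : ∑ l, A i l * (m - |x l|) = (∑ l, A i l) * m - ∑ l, A i l * |x l| := by
        rw [Finset.sum_mul, ← Finset.sum_sub_distrib]
        apply Finset.sum_congr rfl
        intro l _; ring
      rw [e]
      have h1 : (∑ l, A i l) * m ≤ m := by nlinarith [hrow i]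
      linarith
    have hall : ∀ l ∈ Finset.univ, A i l * (m - |x l|) = 0 :=
      (Finset.sum_eq_zero_iff_of_nonneg (fun l _ => hterm l)).mp
        (le_antisymm hsum (Finset.sum_nonneg fun l _ => hterm l))
    have := hall j (Finset.mem_univ j)
    rcases mul_eq_zero.mp this with h'|h'
    · exact absurd h' (ne_of_gt hAj)
    · show m ≤ |x j|; linarith
  have hi0S : i0 ∈ S := reach A hA0 hirr S hstep (show im ∈ S from le_refl m) i0
  have habs : m ≤ ∑ l, A i0 l * |x l| := by
    calc m ≤ |x i0| := hi0S
      _ = |∑ l, A i0 l * x l| := by rw [hfix i0]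
      _ ≤ ∑ l, |A i0 l * x l| := Finset.abs_sum_le_sum_abs _ _
      _ = ∑ l, A i0 l * |x l| := by
          apply Finset.sum_congr rfl
          intro l _
          rw [abs_mul, abs_of_nonneg (hA0 i0 l)]
  have hub : ∑ l, A i0 l * |x l| ≤ (∑ l, A i0 l) * m := by
    rw [Finset.sum_mul]
    apply Finset.sum_le_sum
    intro l _
    exact mul_le_mul_of_nonneg_left (hm l (Finset.mem_univ l)) (hA0 i0 l)
  nlinarith

lemma pos_bound {n : ℕ} (A : Matrix (Fin n) (Fin n) ℝ) (hA0 : ∀ i j, 0 ≤ A i j)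
    (hirr : ∀ i j : Fin n, ∃ k : ℕ, 0 < (A ^ k) i j)
    (hrow : ∀ i, ∑ j, A i j ≤ 1)
    (b : Fin n → ℝ) (hb0 : ∀ i, 0 ≤ b i) (hbne : b ≠ 0)
    (y : Fin n → ℝ) (hy : ∀ i, y i = (∑ l, A i l * y l) + b i) : ∀ i, 0 < y i := by
  obtain ⟨i0, hbi0⟩ : ∃ i, 0 < b i := by
    by_contra hc; push_neg at hc
    exact hbne (funext fun i => le_antisymm (hc i) (hb0 i))
  by_contra hc; push_neg at hc
  obtain ⟨iw, hiw⟩ := hc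
  obtain ⟨im, _, hm⟩ := Finset.exists_min_image Finset.univ y ⟨iw, Finset.mem_univ iw⟩
  set m := y im with hmdef
  have hm0 : m ≤ 0 := le_trans (hm iw (Finset.mem_univ iw)) hiw
  set S : Set (Fin n) := {i | y i ≤ m} with hS
  have hclaim : ∀ i ∈ S, b i = 0 ∧ ∀ j, 0 < A i j → j ∈ S := by
    intro i hi
    have hyi : y i = m := le_antisymm hi (hm i (Finset.mem_univ i))
    have hterm : ∀ l, 0 ≤ A i l * (y l - m) :=
      fun l => mul_nonneg (hA0 i l) (by have := hm l (Finset.mem_univ l); linarith)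
    have e : ∑ l, A i l * (y l - m) = (∑ l, A i l * y l) - (∑ l, A i l) * m := by
      rw [Finset.sum_mul, ← Finset.sum_sub_distrib]
      exact Finset.sum_congr rfl fun l _ => by ring
    have hsum : ∑ l, A i l * (y l - m) ≤ - b i := by
      rw [e]
      have h1 : (∑ l, A i l) * m ≥ m := by nlinarith [hrow i]
      have h2 : (∑ l, A i l * y l) = m - b i := by rw [← hyi, hy i]; ring
      linarith
    have hnn : 0 ≤ ∑ l, A i l * (y l - m) := Finset.sum_nonneg fun l _ => hterm l
    have hb0i : b i = 0 := le_antisymm (by linarith) (hb0 i)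
    refine ⟨hb0i, ?_⟩
    intro j hAj
    have hall : ∀ l ∈ Finset.univ, A i l * (y l - m) = 0 :=
      (Finset.sum_eq_zero_iff_of_nonneg (fun l _ => hterm l)).mp
        (le_antisymm (by linarith) hnn)
    rcases mul_eq_zero.mp (hall j (Finset.mem_univ j)) with h'|h'
    · exact absurd h' (ne_of_gt hAj)
    · show y j ≤ m; linarith
  have hi0S : i0 ∈ S :=
    reach A hA0 hirr S (fun i hi => (hclaim i hi).2) (show im ∈ S from le_refl m) i0
  have := (hclaim i0 hi0S).1
  linarith

lemma lt_one_bound {n : ℕ} (A : Matrix (Fin n) (Fin n) ℝ) (hA0 : ∀ i j, 0 ≤ A i j)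
    (hirr : ∀ i j : Fin n, ∃ k : ℕ, 0 < (A ^ k) i j)
    (a b : Fin n → ℝ) (ha0 : ∀ i, 0 ≤ a i) (hb0 : ∀ i, 0 ≤ b i) (hane : a ≠ 0)
    (hrow : ∀ i, ∑ j, A i j = 1 - a i - b i)
    (y : Fin n → ℝ) (hy : ∀ i, y i = (∑ l, A i l * y l) + b i) : ∀ i, y i < 1 := by
  obtain ⟨i0, hai0⟩ : ∃ i, 0 < a i := by
    by_contra hc; push_neg at hc
    exact hane (funext fun i => le_antisymm (hc i) (ha0 i))
  by_contra hc; push_neg at hc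
  obtain ⟨iw, hiw⟩ := hc
  obtain ⟨im, _, hm⟩ := Finset.exists_max_image Finset.univ y ⟨iw, Finset.mem_univ iw⟩
  set m := y im with hmdef
  have hm1 : 1 ≤ m := le_trans hiw (hm iw (Finset.mem_univ iw))
  set S : Set (Fin n) := {i | m ≤ y i} with hS
  have hclaim : ∀ i ∈ S, a i = 0 ∧ ∀ j, 0 < A i j → j ∈ S := by
    intro i hi
    have hyi : y i = m := le_antisymm (hm i (Finset.mem_univ i)) hi
    have hterm : ∀ l, 0 ≤ A i l * (m - y l) :=
      fun l => mul_nonneg (hA0 i l) (by have := hm l (Finset.mem_univ l); linarith)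
    have e : ∑ l, A i l * (m - y l) = (∑ l, A i l) * m - (∑ l, A i l * y l) := by
      rw [Finset.sum_mul, ← Finset.sum_sub_distrib]
      exact Finset.sum_congr rfl fun l _ => by ring
    have hsum : ∑ l, A i l * (m - y l) = - (m * a i) - (m - 1) * b i := by
      rw [e, hrow i]
      have h2 : (∑ l, A i l * y l) = m - b i := by rw [← hyi, hy i]; ring
      rw [h2]; ring
    have hnn : 0 ≤ ∑ l, A i l * (m - y l) := Finset.sum_nonneg fun l _ => hterm l
    have hma : m * a i ≤ 0 := by nlinarith [hb0 i]
    have ha0i : a i = 0 := by nlinarith [ha0 i]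
    refine ⟨ha0i, ?_⟩
    intro j hAj
    have hall : ∀ l ∈ Finset.univ, A i l * (m - y l) = 0 :=
      (Finset.sum_eq_zero_iff_of_nonneg (fun l _ => hterm l)).mp
        (le_antisymm (by nlinarith [hb0 i]) hnn)
    rcases mul_eq_zero.mp (hall j (Finset.mem_univ j)) with h'|h'
    · exact absurd h' (ne_of_gt hAj)
    · show m ≤ y j; linarith
  have hi0S : i0 ∈ S :=
    reach A hA0 hirr S (fun i hi => (hclaim i hi).2) (show im ∈ S from le_refl m) i0
  have := (hclaim i0 hi0S).1
  linarith

lemma emb_inj (N : ℕ) : Function.Injective (emb N) := by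
  intro i j h
  have := congrArg Fin.val h
  simp only [emb] at this
  exact Fin.ext (by omega)

lemma sum_split (N : ℕ) (hN : 2 ≤ N) (g : Fin (N+1) → ℝ) :
    ∑ j, g j = g 0 + (∑ i, g (emb N i)) + g (Fin.last N) := by
  have h0ne : (0 : Fin (N+1)) ≠ Fin.last N := by
    intro h
    have := congrArg Fin.val h
    simp [Fin.last] at this
    omega
  have h0nim : (0 : Fin (N+1)) ∉ Finset.image (emb N) Finset.univ := by
    simp only [Finset.mem_image, Finset.mem_univ, true_and, not_exists]
    intro i h
    have := congrArg Fin.val h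
    simp [emb] at this
  have hlnim : Fin.last N ∉ Finset.image (emb N) Finset.univ := by
    simp only [Finset.mem_image, Finset.mem_univ, true_and, not_exists]
    intro i h
    have := congrArg Fin.val h
    simp [emb, Fin.last] at this
    have := i.2
    omega
  have huniv : (Finset.univ : Finset (Fin (N+1)))
      = insert 0 (insert (Fin.last N) (Finset.image (emb N) Finset.univ)) := by
    ext j
    simp only [Finset.mem_univ, true_iff, Finset.mem_insert, Finset.mem_image]
    by_cases h0 : j.1 = 0
    · left; exact Fin.ext (by simp [h0])
    by_cases hN' : j.1 = N
    · right; left; exact Fin.ext (by simp [Fin.last, hN'])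
    · right; right
      refine ⟨⟨j.1 - 1, by have := j.2; omega⟩, True.intro, Fin.ext ?_⟩
      simp [emb]; omega
  rw [huniv, Finset.sum_insert (by simp [Finset.mem_insert, h0ne, h0nim]),
    Finset.sum_insert hlnim, Finset.sum_image (fun x _ y _ h => emb_inj N h)]
  ring

lemma cases3 (N : ℕ) (j : Fin (N+1)) :
    j = 0 ∨ j = Fin.last N ∨ ∃ i : Fin (N-1), j = emb N i := by
  by_cases h0 : j.1 = 0
  · left; exact Fin.ext (by simp [h0])
  by_cases hN' : j.1 = N
  · right; left; exact Fin.ext (by simp [Fin.last, hN'])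
  · right; right
    refine ⟨⟨j.1 - 1, by have := j.2; omega⟩, Fin.ext ?_⟩
    simp [emb]; omega

/-- Extension of a vector on transient states by boundary values 0 and 1. -/
def extVec (N : ℕ) (y : Fin (N-1) → ℝ) : Fin (N+1) → ℝ := fun j =>
  if _ : j.1 = 0 then 0 else if _ : j.1 = N then 1 else y ⟨j.1 - 1, by have := j.2; omega⟩

lemma extVec_zero (N : ℕ) (y : Fin (N-1) → ℝ) : extVec N y 0 = 0 := by
  simp [extVec]

lemma extVec_last (N : ℕ) (hN : 2 ≤ N) (y : Fin (N-1) → ℝ) :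
    extVec N y (Fin.last N) = 1 := by
  simp only [extVec, Fin.val_last]
  rw [dif_neg (by omega)]
  simp

lemma extVec_emb (N : ℕ) (y : Fin (N-1) → ℝ) (i : Fin (N-1)) :
    extVec N y (emb N i) = y i := by
  have h2 := i.2
  simp only [extVec, emb]
  exact (dif_neg (show ¬ (i.1 + 1 = 0) by omega)).trans ((dif_neg (show ¬ (i.1 + 1 = N) by omega)).trans rfl)

theorem stmt4 (N : ℕ) (hN : 2 ≤ N) (M : Matrix (Fin (N+1)) (Fin (N+1)) ℝ)
    (hM0 : ∀ i j, 0 ≤ M i j) (hM1 : ∀ i, ∑ j, M i j = 1)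
    (habs0 : ∀ j, M 0 j = if j = 0 then 1 else 0)
    (habsN : ∀ j, M (Fin.last N) j = if j = Fin.last N then 1 else 0)
    (hirr : ∀ i j : Fin (N-1), ∃ k : ℕ, 0 < ((core N M) ^ k) i j)
    (ha : (fun i : Fin (N-1) => M (emb N i) 0) ≠ 0)
    (hb : (fun i : Fin (N-1) => M (emb N i) (Fin.last N)) ≠ 0) :
    IsUnit (1 - core N M) ∧
    (∃! F : Fin (N+1) → ℝ,
      F 0 = 0 ∧ F (Fin.last N) = 1 ∧ M.mulVec F = F) ∧
    (∀ F : Fin (N+1) → ℝ, F 0 = 0 → F (Fin.last N) = 1 → M.mulVec F = F →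
      (fun i : Fin (N-1) => F (emb N i))
          = (1 - core N M)⁻¹.mulVec (fun i : Fin (N-1) => M (emb N i) (Fin.last N)) ∧
      (∀ i : Fin (N-1), 0 < F (emb N i) ∧ F (emb N i) < 1)) := by
  have hA0 : ∀ i j, 0 ≤ core N M i j := fun i j => hM0 _ _
  have hrow : ∀ i, ∑ j, core N M i j
      = 1 - M (emb N i) 0 - M (emb N i) (Fin.last N) := by
    intro i
    have h := hM1 (emb N i)
    rw [sum_split N hN (fun j => M (emb N i) j)] at h
    have : ∑ j, core N M i j = ∑ j, M (emb N i) (emb N j) := rfl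
    rw [this]
    linarith
  have hrowle : ∀ i, ∑ j, core N M i j ≤ 1 := by
    intro i
    rw [hrow i]
    have h1 := hM0 (emb N i) 0
    have h2 := hM0 (emb N i) (Fin.last N)
    linarith
  obtain ⟨ib, hib⟩ : ∃ i, 0 < M (emb N i) (Fin.last N) := by
    by_contra hc; push_neg at hc
    exact hb (funext fun i => le_antisymm (hc i) (hM0 _ _))
  have hrowlt : ∑ j, core N M ib j < 1 := by
    rw [hrow ib]
    have h1 := hM0 (emb N ib) 0
    linarith
  -- invertibility
  have hdet : IsUnit (1 - core N M).det := by
    rw [isUnit_iff_ne_zero]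
    intro hdet0
    obtain ⟨v, hv0, hv⟩ := (Matrix.exists_mulVec_eq_zero_iff).mpr hdet0
    have hfix : (core N M).mulVec v = v := by
      rw [Matrix.sub_mulVec, Matrix.one_mulVec] at hv
      have := sub_eq_zero.mp hv
      exact this.symm
    exact hv0 (ker_triv (core N M) hA0 hirr hrowle ib hrowlt v hfix)
  have hUnit : IsUnit (1 - core N M) := (Matrix.isUnit_iff_isUnit_det _).mpr hdet
  -- the candidate transient vector
  set b : Fin (N-1) → ℝ := fun i : Fin (N-1) => M (emb N i) (Fin.last N) with hbdef
  set y : Fin (N-1) → ℝ := (1 - core N M)⁻¹.mulVec b with hydef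
  have sub_mulVec_apply : ∀ (z : Fin (N-1) → ℝ) (i : Fin (N-1)),
      ((1 - core N M).mulVec z) i = z i - ∑ l, core N M i l * z l := by
    intro z i
    have e1 : ((1 - core N M).mulVec z) i
        = ∑ l, ((1 : Matrix (Fin (N-1)) (Fin (N-1)) ℝ) - core N M) i l * z l := rfl
    rw [e1]
    simp [Matrix.sub_apply, Matrix.one_apply, sub_mul, Finset.sum_sub_distrib, ite_mul]
  have hyeq : (1 - core N M).mulVec y = b := by
    rw [hydef, Matrix.mulVec_mulVec, Matrix.mul_nonsing_inv _ hdet, Matrix.one_mulVec]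
  have hyfix : ∀ i, y i = (∑ l, core N M i l * y l) + b i := by
    intro i
    have h := congrFun hyeq i
    rw [sub_mulVec_apply] at h
    linarith
  have htrans : ∀ F : Fin (N+1) → ℝ, F 0 = 0 → F (Fin.last N) = 1 → M.mulVec F = F →
      ∀ i, F (emb N i) = (∑ l, core N M i l * F (emb N l)) + b i := by
    intro F hF0 hFN hMF i
    have h := congrFun hMF (emb N i)
    have h1 : M.mulVec F (emb N i) = ∑ j, M (emb N i) j * F j := rfl
    rw [h1, sum_split N hN (fun j => M (emb N i) j * F j)] at h
    rw [hF0, hFN] at h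
    have h2 : ∑ l, M (emb N i) (emb N l) * F (emb N l)
        = ∑ l, core N M i l * F (emb N l) := rfl
    rw [h2] at h
    have hbi : M (emb N i) (Fin.last N) = b i := rfl
    rw [hbi] at h
    linarith
  have hthird : ∀ F : Fin (N+1) → ℝ, F 0 = 0 → F (Fin.last N) = 1 → M.mulVec F = F →
      (fun i : Fin (N-1) => F (emb N i)) = y ∧
      (∀ i : Fin (N-1), 0 < F (emb N i) ∧ F (emb N i) < 1) := by
    intro F hF0 hFN hMF
    have ht := htrans F hF0 hFN hMF
    constructor
    · have heq : (1 - core N M).mulVec (fun i : Fin (N-1) => F (emb N i)) = b := by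
        funext i
        rw [sub_mulVec_apply]
        have := ht i
        show F (emb N i) - ∑ l, core N M i l * F (emb N l) = b i
        linarith
      calc (fun i : Fin (N-1) => F (emb N i))
          = (1 - core N M)⁻¹.mulVec
              ((1 - core N M).mulVec (fun i : Fin (N-1) => F (emb N i))) := by
            rw [Matrix.mulVec_mulVec, Matrix.nonsing_inv_mul _ hdet, Matrix.one_mulVec]
        _ = y := by rw [heq]
    · intro i
      constructor
      · exact pos_bound (core N M) hA0 hirr hrowle b (fun i => hM0 _ _) hb
          (fun i => F (emb N i)) ht i
      · exact lt_one_bound (core N M) hA0 hirr (fun i : Fin (N-1) => M (emb N i) 0) b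
          (fun i => hM0 _ _) (fun i => hM0 _ _) ha hrow
          (fun i => F (emb N i)) ht i
  -- the explicit fixed point
  have hF0fix : M.mulVec (extVec N y) = extVec N y := by
    funext j
    rcases cases3 N j with h|h|⟨i, h⟩
    · subst h
      have h1 : M.mulVec (extVec N y) 0 = ∑ k, M 0 k * extVec N y k := rfl
      rw [h1]
      simp [habs0, ite_mul, one_mul, zero_mul]
    · subst h
      have h1 : M.mulVec (extVec N y) (Fin.last N)
          = ∑ k, M (Fin.last N) k * extVec N y k := rfl
      rw [h1]
      simp [habsN, ite_mul, one_mul, zero_mul]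
    · subst h
      have h1 : M.mulVec (extVec N y) (emb N i)
          = ∑ k, M (emb N i) k * extVec N y k := rfl
      rw [h1, sum_split N hN (fun k => M (emb N i) k * extVec N y k),
        extVec_zero, extVec_last N hN, extVec_emb]
      simp only [extVec_emb]
      have h2 : ∑ l, M (emb N i) (emb N l) * y l = ∑ l, core N M i l * y l := rfl
      rw [h2]
      have hbi : M (emb N i) (Fin.last N) = b i := rfl
      rw [hbi]
      have := hyfix i
      linarith
  refine ⟨hUnit, ⟨extVec N y, ⟨extVec_zero N y, extVec_last N hN y, hF0fix⟩, ?_⟩,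
    fun F h0 h1 h2 => hthird F h0 h1 h2⟩
  intro G hG
  obtain ⟨hG0, hGN, hGfix⟩ := hG
  have h1 := (hthird G hG0 hGN hGfix).1
  funext j
  rcases cases3 N j with h|h|⟨i, h⟩ <;> subst h
  · rw [hG0, extVec_zero]
  · rw [hGN, extVec_last N hN]
  · rw [extVec_emb]
    exact congrFun h1 i
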